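/- Let G1 and G2 be disjoint multigraphs each with at least two edges, and let G = (G1,e1,u1) ⋄ (G2,e2,u2) be their vertex-edge-identification. Then G is biconnected if and only if both G1 and G2 are biconnected. -/

import Mathlib

open scoped Classical

/-- A finite multigraph without loops: a vertex type, an edge type, and an
incidence map assigning to each edge an unordered pair of distinct vertices. -/
structure MGraph where
  V : Type
  E : Type
  finV : Finite V
  finE : Finite E
  ends : E → Sym2 V
  noLoop : ∀ e, ¬ (ends e).IsDiag

namespace MGraph

variable (G : MGraph)

/-- Degree of a vertex counting only edges in the edge set `F`. -/
noncomputable def degOn (F : Set G.E) (v : G.V) : ℕ := {e | e ∈ F ∧ v ∈ G.ends e}.ncard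

/-- Degree of a vertex. -/
noncomputable def deg (v : G.V) : ℕ := G.degOn Set.univ v

/-- Adjacency using only edges from `F`. -/
def AdjOn (F : Set G.E) (a b : G.V) : Prop := ∃ e ∈ F, G.ends e = s(a, b)

/-- Reachability using only edges from `F`. -/
def ReachOn (F : Set G.E) : G.V → G.V → Prop := Relation.ReflTransGen (G.AdjOn F)

/-- Connectivity of a multigraph. -/
def Connected : Prop := Nonempty G.V ∧ ∀ a b : G.V, G.ReachOn Set.univ a b

/-- A set of edges forms a cycle: it is nonempty, every vertex has degree 0 or 2
in it, and any two of its endpoints are joined by a path inside it. -/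
def IsCycle (C : Set G.E) : Prop :=
  C.Nonempty ∧ (∀ v, G.degOn C v = 0 ∨ G.degOn C v = 2) ∧
    ∀ e ∈ C, ∀ f ∈ C, ∀ a b : G.V, a ∈ G.ends e → b ∈ G.ends f → G.ReachOn C a b

/-- A cycle decomposition of the edge set `F`: a set of cycles inside `F` such
that every edge of `F` lies in exactly one of them. -/
def IsCycleDecompOn (F : Set G.E) (D : Set (Set G.E)) : Prop :=
  (∀ C ∈ D, G.IsCycle C ∧ C ⊆ F) ∧ ∀ e ∈ F, ∃! C, C ∈ D ∧ e ∈ C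

/-- A cycle decomposition of the graph. -/
def IsCycleDecomp (D : Set (Set G.E)) : Prop := G.IsCycleDecompOn Set.univ D

/-- Minimum number of cycles in a cycle decomposition of `F`. -/
noncomputable def cOn (F : Set G.E) : ℕ :=
  sInf {n | ∃ D, G.IsCycleDecompOn F D ∧ D.ncard = n}

/-- Maximum number of cycles in a cycle decomposition of `F`. -/
noncomputable def nuOn (F : Set G.E) : ℕ :=
  sSup {n | ∃ D, G.IsCycleDecompOn F D ∧ D.ncard = n}

/-- Minimum cycle number. -/
noncomputable def c : ℕ := G.cOn Set.univ

/-- Maximum cycle number. -/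
noncomputable def nu : ℕ := G.nuOn Set.univ

/-- A multigraph is Eulerian if it admits a closed walk traversing every edge
exactly once. -/
def IsEulerian : Prop :=
  ∃ (vs : List G.V) (es : List G.E),
    vs.length = es.length + 1 ∧
    (∀ (i : ℕ) (e : G.E) (a b : G.V), es[i]? = some e → vs[i]? = some a →
      vs[i + 1]? = some b → G.ends e = s(a, b)) ∧
    vs.head? = vs.getLast? ∧ es.Nodup ∧ ∀ e : G.E, e ∈ es

/-- A cut-edge (bridge): its endpoints are disconnected after its removal. -/
def IsBridge (e : G.E) : Prop :=
  ∃ a b, G.ends e = s(a, b) ∧ ¬ G.ReachOn {e}ᶜ a b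

/-- 2-edge-connectivity: connected and without cut-edges. -/
def TwoEdgeConnected : Prop := G.Connected ∧ ∀ e, ¬ G.IsBridge e

/-- Reachability avoiding a vertex. -/
def ReachAvoid (v : G.V) (a b : G.V) : Prop :=
  Relation.ReflTransGen (fun x y => x ≠ v ∧ y ≠ v ∧ G.AdjOn Set.univ x y) a b

/-- A cut-vertex: two vertices in the same component get separated by its removal. -/
def IsCutVertex (v : G.V) : Prop :=
  ∃ a b, a ≠ v ∧ b ≠ v ∧ G.ReachOn Set.univ a b ∧ ¬ G.ReachAvoid v a b

/-- Biconnected: connected, at least two vertices, and without cut-vertices. -/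
def Biconnected : Prop :=
  G.Connected ∧ 2 ≤ Nat.card G.V ∧ ∀ v, ¬ G.IsCutVertex v

/-- The vertices covered by a set of edges. -/
def VertexSetOf (C : Set G.E) : Set G.V := {v | ∃ e ∈ C, v ∈ G.ends e}

/-- No two edge-disjoint cycles share more than two vertices. -/
def NoTwoCyclesShareThree : Prop :=
  ∀ C1 C2 : Set G.E, G.IsCycle C1 → G.IsCycle C2 → Disjoint C1 C2 →
    (G.VertexSetOf C1 ∩ G.VertexSetOf C2).ncard ≤ 2

/-- An Eulerian multiedge: two vertices joined by an even positive number of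
parallel edges. -/
def IsEulerianMultiedge : Prop :=
  Nat.card G.V = 2 ∧ 0 < Nat.card G.E ∧ Even (Nat.card G.E)

end MGraph

/-- Isomorphism of multigraphs. -/
structure MIso (G H : MGraph) where
  vEquiv : G.V ≃ H.V
  eEquiv : G.E ≃ H.E
  ends_eq : ∀ e, H.ends (eEquiv e) = (G.ends e).map vEquiv

namespace MGraph

/-- Vertex-identification: glue `u1 ∈ V(G1)` with `u2 ∈ V(G2)`. -/
noncomputable def vertexIdent (G1 G2 : MGraph) (u1 : G1.V) (u2 : G2.V) : MGraph where
  V := G1.V ⊕ {v : G2.V // v ≠ u2}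
  E := G1.E ⊕ G2.E
  finV := by have := G1.finV; have := G2.finV; infer_instance
  finE := by have := G1.finE; have := G2.finE; infer_instance
  ends := fun e =>
    match e with
    | Sum.inl e => (G1.ends e).map Sum.inl
    | Sum.inr e => (G2.ends e).map
        (fun v => if h : v = u2 then Sum.inl u1 else Sum.inr ⟨v, h⟩)
  noLoop := by
    rintro (e | e) h
    · exact G1.noLoop e ((Sym2.isDiag_map Sum.inl_injective).mp h)
    · refine G2.noLoop e ((Sym2.isDiag_map ?_).mp h)
      intro a b hab
      by_cases ha : a = u2 <;> by_cases hb : b = u2 <;>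
        simp [ha, hb] at hab ⊢ <;> simp_all

/-- Edge-identification: delete `e1` and `e2` (with endpoints `u1, v1` resp.
`u2, v2`) and add the new edges `u1u2` and `v1v2`. -/
def edgeIdent (G1 G2 : MGraph) (e1 : G1.E) (e2 : G2.E)
    (u1 v1 : G1.V) (u2 v2 : G2.V) : MGraph where
  V := G1.V ⊕ G2.V
  E := {e : G1.E // e ≠ e1} ⊕ {e : G2.E // e ≠ e2} ⊕ Bool
  finV := by have := G1.finV; have := G2.finV; infer_instance
  finE := by have := G1.finE; have := G2.finE; infer_instance
  ends := fun e =>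
    match e with
    | Sum.inl e => (G1.ends e.1).map Sum.inl
    | Sum.inr (Sum.inl e) => (G2.ends e.1).map Sum.inr
    | Sum.inr (Sum.inr true) => s(Sum.inl u1, Sum.inr u2)
    | Sum.inr (Sum.inr false) => s(Sum.inl v1, Sum.inr v2)
  noLoop := by
    rintro (e | e | b) h
    · exact G1.noLoop e.1 ((Sym2.isDiag_map Sum.inl_injective).mp h)
    · exact G2.noLoop e.1 ((Sym2.isDiag_map Sum.inr_injective).mp h)
    · cases b <;> simp [Sym2.mk_isDiag_iff] at h

/-- Vertex-edge-identification: identify `v1` with `v2`, delete `e1 = u1v1`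
and `e2 = u2v2`, and add a new edge `u1u2`. -/
noncomputable def vertexEdgeIdent (G1 G2 : MGraph) (e1 : G1.E) (e2 : G2.E)
    (u1 v1 : G1.V) (u2 v2 : G2.V) (h2 : G2.ends e2 = s(u2, v2)) : MGraph where
  V := G1.V ⊕ {w : G2.V // w ≠ v2}
  E := {e : G1.E // e ≠ e1} ⊕ {e : G2.E // e ≠ e2} ⊕ Unit
  finV := by have := G1.finV; have := G2.finV; infer_instance
  finE := by have := G1.finE; have := G2.finE; infer_instance
  ends := fun e =>
    match e with
    | Sum.inl e => (G1.ends e.1).map Sum.inl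
    | Sum.inr (Sum.inl e) => (G2.ends e.1).map
        (fun w => if h : w = v2 then Sum.inl v1 else Sum.inr ⟨w, h⟩)
    | Sum.inr (Sum.inr _) =>
        s(Sum.inl u1, Sum.inr ⟨u2, fun h =>
          G2.noLoop e2 (by rw [h2, h]; exact Sym2.mk_isDiag_iff.mpr rfl)⟩)
  noLoop := by
    rintro (e | e | u) h
    · exact G1.noLoop e.1 ((Sym2.isDiag_map Sum.inl_injective).mp h)
    · refine G2.noLoop e.1 ((Sym2.isDiag_map ?_).mp h)
      intro a b hab
      by_cases ha : a = v2 <;> by_cases hb : b = v2 <;>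
        simp [ha, hb] at hab ⊢ <;> simp_all
    · simp [Sym2.mk_isDiag_iff] at h

/-- Delete an edge from a multigraph. -/
def deleteEdge (G : MGraph) (e : G.E) : MGraph where
  V := G.V
  E := {f : G.E // f ≠ e}
  finV := G.finV
  finE := by have := G.finE; infer_instance
  ends := fun f => G.ends f.1
  noLoop := fun f => G.noLoop f.1

/-- `Sym2.pmap`-style map into a subtype. -/
noncomputable def sym2Pmap {α β : Type} {p : α → Prop} (f : ∀ a, p a → β)
    (s : Sym2 α) (h : ∀ a ∈ s, p a) : Sym2 β :=
  let z := Classical.choose (Quot.exists_rep s)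
  s(f z.1 (h z.1 (by
      have hz : Quot.mk _ z = s := Classical.choose_spec (Quot.exists_rep s)
      rw [← hz]; exact Sym2.mem_mk_left z.1 z.2)),
    f z.2 (h z.2 (by
      have hz : Quot.mk _ z = s := Classical.choose_spec (Quot.exists_rep s)
      rw [← hz]; exact Sym2.mem_mk_right z.1 z.2)))

/-- Delete a vertex (and all incident edges) from a multigraph. -/
noncomputable def deleteVertex (G : MGraph) (v : G.V) : MGraph where
  V := {w : G.V // w ≠ v}
  E := {e : G.E // v ∉ G.ends e}
  finV := by have := G.finV; infer_instance
  finE := by have := G.finE; infer_instance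
  ends := fun e => sym2Pmap (fun a ha => (⟨a, ha⟩ : {w : G.V // w ≠ v}))
    (G.ends e.1) (fun a ha hav => e.2 (hav ▸ ha))
  noLoop := by
    rintro ⟨e, he⟩ h
    apply G.noLoop e
    unfold sym2Pmap at h
    have hz : Quot.mk _ (Classical.choose (Quot.exists_rep (G.ends e))) = G.ends e :=
      Classical.choose_spec (Quot.exists_rep (G.ends e))
    rw [Sym2.mk_isDiag_iff] at h
    have : (Classical.choose (Quot.exists_rep (G.ends e))).1 =
        (Classical.choose (Quot.exists_rep (G.ends e))).2 := congrArg Subtype.val h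
    rw [← hz]
    exact Sym2.mk_isDiag_iff.mpr this

end MGraph

/-- A tree decomposition of a multigraph: a tree of bags covering all vertices
and edges such that the bags containing a given vertex form a subtree. -/
structure TreeDecomp (G : MGraph) where
  ι : Type
  t : SimpleGraph ι
  isTree : t.IsTree
  bag : ι → Set G.V
  covers_vertex : ∀ v : G.V, ∃ i, v ∈ bag i
  covers_edge : ∀ e : G.E, ∃ i, ∀ v ∈ G.ends e, v ∈ bag i
  bags_connected : ∀ v : G.V, (SimpleGraph.induce {i | v ∈ bag i} t).Connected

namespace MGraph

/-- The graph has treewidth at most `k`. -/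
def twLE (G : MGraph) (k : ℕ) : Prop :=
  ∃ T : TreeDecomp G, ∀ i, (T.bag i).ncard ≤ k + 1

/-- Treewidth of a multigraph. -/
noncomputable def treewidth (G : MGraph) : ℕ := sInf {k | G.twLE k}

/-- The closed necklace on `n ≥ 2` vertices: a cycle of length `n` with all
of its edges doubled. -/
def necklace (n : ℕ) (hn : 2 ≤ n) : MGraph where
  V := ZMod n
  E := ZMod n × Bool
  finV := by have : NeZero n := ⟨by omega⟩; infer_instance
  finE := by have : NeZero n := ⟨by omega⟩; infer_instance
  ends := fun e => s(e.1, e.1 + 1)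
  noLoop := by
    have : Fact (1 < n) := ⟨hn⟩
    intro e h
    rw [Sym2.mk_isDiag_iff] at h
    exact one_ne_zero (left_eq_add.mp h)

end MGraph


namespace VEItmp

theorem rtg_bind {α : Type*} {r s : α → α → Prop} {a b : α}
    (h : Relation.ReflTransGen r a b)
    (hs : ∀ x y, r x y → Relation.ReflTransGen s x y) :
    Relation.ReflTransGen s a b := by
  induction h with
  | refl => exact .refl
  | tail _ hxy ih => exact ih.trans (hs _ _ hxy)

theorem rtg_map {α β : Type*} {r : α → α → Prop} {s : β → β → Prop} (f : α → β)
    (h : ∀ x y, r x y → Relation.ReflTransGen s (f x) (f y)) :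
    ∀ {a b : α}, Relation.ReflTransGen r a b → Relation.ReflTransGen s (f a) (f b) := by
  intro a b hab
  induction hab with
  | refl => exact .refl
  | tail _ hxy ih => exact ih.trans (h _ _ hxy)

theorem sym2_exists {α : Type*} (s : Sym2 α) : ∃ p q, s = s(p, q) := by
  induction s using Sym2.ind with
  | _ p q => exact ⟨p, q, rfl⟩

end VEItmp

namespace MGraph

variable {G : MGraph}

theorem adjOn_symm' {F : Set G.E} {a b : G.V} (h : G.AdjOn F a b) : G.AdjOn F b a := by
  obtain ⟨e, he, hend⟩ := h
  exact ⟨e, he, by rw [hend, Sym2.eq_swap]⟩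

theorem reachOn_symm' {F : Set G.E} {a b : G.V} (h : G.ReachOn F a b) : G.ReachOn F b a := by
  unfold ReachOn at h ⊢
  induction h with
  | refl => exact .refl
  | tail _ hxy ih => exact Relation.ReflTransGen.head (adjOn_symm' hxy) ih

theorem reachOn_mono' {F F' : Set G.E} (hFF : F ⊆ F') {a b : G.V}
    (h : G.ReachOn F a b) : G.ReachOn F' a b := by
  refine VEItmp.rtg_bind h ?_
  rintro x y ⟨e, he, hend⟩
  exact .single ⟨e, hFF he, hend⟩

theorem bicon_avoid (hG : G.Biconnected) {x a b : G.V} (ha : a ≠ x) (hb : b ≠ x) :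
    G.ReachAvoid x a b := by
  by_contra hc
  exact hG.2.2 x ⟨a, b, ha, hb, hG.1.2 a b, hc⟩

theorem reachAvoid_reachOn {v a b : G.V} (h : G.ReachAvoid v a b) :
    G.ReachOn {e | v ∉ G.ends e} a b := by
  refine VEItmp.rtg_bind h ?_
  rintro x y ⟨hx, hy, e, -, he⟩
  refine Relation.ReflTransGen.single ⟨e, ?_, he⟩
  intro hv
  rw [he, Sym2.mem_iff] at hv
  rcases hv with rfl | rfl
  · exact hx rfl
  · exact hy rfl

theorem noLoop_ne {e : G.E} {u v : G.V} (h : G.ends e = s(u, v)) : u ≠ v := by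
  intro huv
  exact G.noLoop e (by rw [h, huv]; exact Sym2.mk_isDiag_iff.mpr rfl)

theorem detour (hG : G.Biconnected) (hE : 2 ≤ Nat.card G.E)
    {e : G.E} {u v : G.V} (h : G.ends e = s(u, v)) :
    G.ReachOn {e}ᶜ u v := by
  have huv : u ≠ v := noLoop_ne h
  have hfE := G.finE
  have : Nontrivial G.E := Finite.one_lt_card_iff_nontrivial.mp hE
  obtain ⟨f, hf⟩ := exists_ne e
  obtain ⟨p, q, hpq⟩ := VEItmp.sym2_exists (G.ends f)
  have reach_sub : ∀ (x y c : G.V), c ∈ G.ends e → x ≠ c → y ≠ c → G.ReachOn {e}ᶜ x y := by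
    intro x y c hc hx hy
    refine reachOn_mono' ?_ (reachAvoid_reachOn (bicon_avoid hG hx hy))
    intro g hg hge
    rw [Set.mem_singleton_iff] at hge
    exact hg (hge ▸ hc)
  have hu : u ∈ G.ends e := by rw [h]; exact Sym2.mem_mk_left u v
  have hv : v ∈ G.ends e := by rw [h]; exact Sym2.mem_mk_right u v
  by_cases hp : p ≠ u ∧ p ≠ v
  · exact (reach_sub u p v hv huv hp.2).trans (reach_sub p v u hu hp.1 huv.symm)
  · by_cases hq : q ≠ u ∧ q ≠ v
    · exact (reach_sub u q v hv huv hq.2).trans (reach_sub q v u hu hq.1 huv.symm)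
    · -- both p and q lie in {u,v}; since p ≠ q, f is parallel to e
      have hpq' : p ≠ q := noLoop_ne hpq
      have : G.ends f = s(u, v) := by
        rcases not_and_or.mp hp with hpu | hpv
        · rw [not_ne_iff] at hpu
          subst hpu
          rcases not_and_or.mp hq with hqu | hqv
          · rw [not_ne_iff] at hqu; exact absurd hqu.symm hpq'
          · rw [not_ne_iff] at hqv; subst hqv; exact hpq
        · rw [not_ne_iff] at hpv
          subst hpv
          rcases not_and_or.mp hq with hqu | hqv
          · rw [not_ne_iff] at hqu; subst hqu; rw [hpq, Sym2.eq_swap]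
          · rw [not_ne_iff] at hqv; exact absurd hqv.symm hpq'
      exact .single ⟨f, by simpa using hf, this⟩


theorem del_edge_conn {G : MGraph} (hG : G.Biconnected) (hE : 2 ≤ Nat.card G.E)
    {e : G.E} {u v : G.V} (h : G.ends e = s(u, v)) (a b : G.V) :
    G.ReachOn {e}ᶜ a b := by
  have hd := detour hG hE h
  refine VEItmp.rtg_bind (hG.1.2 a b) ?_
  rintro x y ⟨f, -, hf⟩
  by_cases hfe : f = e
  · subst hfe
    rw [h, Sym2.eq_iff] at hf
    rcases hf with ⟨rfl, rfl⟩ | ⟨rfl, rfl⟩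
    · exact hd
    · exact reachOn_symm' hd
  · exact .single ⟨f, by simpa using hfe, hf⟩

theorem reachAvoid_symm' {G : MGraph} {v a b : G.V} (h : G.ReachAvoid v a b) :
    G.ReachAvoid v b a := by
  unfold ReachAvoid at h ⊢
  induction h with
  | refl => exact .refl
  | tail _ hxy ih =>
    exact Relation.ReflTransGen.head ⟨hxy.2.1, hxy.1, adjOn_symm' hxy.2.2⟩ ih

end MGraph

namespace VEIproof

open MGraph

variable (G1 G2 : MGraph) (v1 : G1.V) (v2 : G2.V)

/-- The embedding of `G2`'s vertices into the identified graph. -/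
noncomputable def ι2 : G2.V → G1.V ⊕ {w : G2.V // w ≠ v2} :=
  fun w => if h : w = v2 then Sum.inl v1 else Sum.inr ⟨w, h⟩

variable {G1 G2 v1 v2}

theorem ι2_v2 : ι2 G1 G2 v1 v2 v2 = Sum.inl v1 := dif_pos rfl

theorem ι2_ne {w : G2.V} (hw : w ≠ v2) : ι2 G1 G2 v1 v2 w = Sum.inr ⟨w, hw⟩ := dif_neg hw

theorem ι2_inj {c d : G2.V} (h : ι2 G1 G2 v1 v2 c = ι2 G1 G2 v1 v2 d) : c = d := by
  by_cases hc : c = v2 <;> by_cases hd : d = v2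
  · rw [hc, hd]
  · rw [hc, ι2_v2, ι2_ne hd] at h; exact absurd h (by simp)
  · rw [hd, ι2_v2, ι2_ne hc] at h; exact absurd h.symm (by simp)
  · rw [ι2_ne hc, ι2_ne hd] at h
    exact congrArg Subtype.val (Sum.inr.inj h)

end VEIproof

namespace VEIproof

open MGraph

section

variable {G1 G2 : MGraph} {e1 : G1.E} {e2 : G2.E} {u1 v1 : G1.V} {u2 v2 : G2.V}
  {h2 : G2.ends e2 = s(u2, v2)}

local notation "H" => MGraph.vertexEdgeIdent G1 G2 e1 e2 u1 v1 u2 v2 h2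
local notation "ι" => ι2 G1 G2 v1 v2

theorem ends_inl (f : {e : G1.E // e ≠ e1}) :
    (H).ends (Sum.inl f) = (G1.ends f.1).map Sum.inl := rfl

theorem ends_inr (f : {e : G2.E // e ≠ e2}) :
    (H).ends (Sum.inr (Sum.inl f)) = (G2.ends f.1).map ι := rfl

theorem ends_new (hu2 : u2 ≠ v2) (t : Unit) :
    (H).ends (Sum.inr (Sum.inr t)) = s(Sum.inl u1, Sum.inr ⟨u2, hu2⟩) := rfl

theorem adj1 {c d : G1.V} {f : G1.E} (hf : f ≠ e1) (he : G1.ends f = s(c, d)) :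
    (H).AdjOn Set.univ (Sum.inl c) (Sum.inl d) :=
  ⟨Sum.inl ⟨f, hf⟩, trivial, by rw [ends_inl, he, Sym2.map_pair_eq]; rfl⟩

theorem adj2 {c d : G2.V} {f : G2.E} (hf : f ≠ e2) (he : G2.ends f = s(c, d)) :
    (H).AdjOn Set.univ (ι c) (ι d) :=
  ⟨Sum.inr (Sum.inl ⟨f, hf⟩), trivial, by rw [ends_inr, he, Sym2.map_pair_eq]; rfl⟩

theorem adjS (hu2 : u2 ≠ v2) : (H).AdjOn Set.univ (Sum.inl u1) (ι u2) :=
  ⟨Sum.inr (Sum.inr ()), trivial, by rw [ends_new hu2, ι2_ne hu2]; rfl⟩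

theorem adjCases (hu2 : u2 ≠ v2) {x y : G1.V ⊕ {w : G2.V // w ≠ v2}}
    (hxy : (H).AdjOn Set.univ x y) :
    (∃ (f : G1.E) (_ : f ≠ e1) (c d : G1.V),
        G1.ends f = s(c, d) ∧ x = Sum.inl c ∧ y = Sum.inl d) ∨
    (∃ (f : G2.E) (_ : f ≠ e2) (c d : G2.V),
        G2.ends f = s(c, d) ∧ x = ι c ∧ y = ι d) ∨
    ((x = Sum.inl u1 ∧ y = ι u2) ∨ (x = ι u2 ∧ y = Sum.inl u1)) := by
  obtain ⟨e, -, he⟩ := hxy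
  rcases e with ⟨f, hf⟩ | ⟨f, hf⟩ | t
  · obtain ⟨p, q, hpq⟩ := VEItmp.sym2_exists (G1.ends f)
    rw [ends_inl, hpq, Sym2.map_pair_eq] at he; replace he := Sym2.eq_iff.mp he
    rcases he with ⟨hx, hy⟩ | ⟨hx, hy⟩
    · exact .inl ⟨f, hf, p, q, hpq, hx.symm, hy.symm⟩
    · exact .inl ⟨f, hf, q, p, by rw [hpq, Sym2.eq_swap], hy.symm, hx.symm⟩
  · obtain ⟨p, q, hpq⟩ := VEItmp.sym2_exists (G2.ends f)
    rw [ends_inr, hpq, Sym2.map_pair_eq] at he; replace he := Sym2.eq_iff.mp he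
    rcases he with ⟨hx, hy⟩ | ⟨hx, hy⟩
    · exact .inr (.inl ⟨f, hf, p, q, hpq, hx.symm, hy.symm⟩)
    · exact .inr (.inl ⟨f, hf, q, p, by rw [hpq, Sym2.eq_swap], hy.symm, hx.symm⟩)
  · rw [ends_new hu2] at he; replace he := Sym2.eq_iff.mp he
    rcases he with ⟨hx, hy⟩ | ⟨hx, hy⟩
    · exact .inr (.inr (.inl ⟨hx.symm, by rw [← hy, ι2_ne hu2]⟩))
    · exact .inr (.inr (.inr ⟨by rw [← hy, ι2_ne hu2], hx.symm⟩))

end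

end VEIproof

namespace VEIproof

open MGraph

section

variable {G1 G2 : MGraph} {e1 : G1.E} {e2 : G2.E} {u1 v1 : G1.V} {u2 v2 : G2.V}
  {h2 : G2.ends e2 = s(u2, v2)}

local notation "H" => MGraph.vertexEdgeIdent G1 G2 e1 e2 u1 v1 u2 v2 h2
local notation "ι" => ι2 G1 G2 v1 v2

theorem forward (h1 : G1.ends e1 = s(u1, v1)) (hB : (H).Biconnected) :
    G1.Biconnected ∧ G2.Biconnected := by
  have hfV1 := G1.finV
  have hfV2 := G2.finV
  have hu1v1 : u1 ≠ v1 := noLoop_ne h1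
  have hu2v2 : u2 ≠ v2 := noLoop_ne h2
  have hBav : ∀ {x a b : (H).V}, a ≠ x → b ≠ x → (H).ReachAvoid x a b :=
    fun ha hb => bicon_avoid hB ha hb
  -- projections
  have hπ1 : ∀ c : G2.V, (Sum.elim id (fun _ => v1) : (H).V → G1.V) (ι c) = v1 := by
    intro c
    by_cases h : c = v2
    · rw [h, ι2_v2]; rfl
    · rw [ι2_ne h]; rfl
  have hπ1' : ∀ (c : G2.V), c ≠ v2 →
      (Sum.elim id (fun _ => u1) : (H).V → G1.V) (ι c) = u1 := by
    intro c h
    rw [ι2_ne h]; rfl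
  have hπ2 : ∀ c : G2.V, (Sum.elim (fun _ => v2) Subtype.val : (H).V → G2.V) (ι c) = c := by
    intro c
    by_cases h : c = v2
    · rw [h, ι2_v2]; rfl
    · rw [ι2_ne h]; rfl
  have hπ2' : ∀ (c : G2.V), c ≠ v2 →
      (Sum.elim (fun _ => u2) Subtype.val : (H).V → G2.V) (ι c) = c := by
    intro c h
    rw [ι2_ne h]; rfl
  constructor
  · -- G1 is biconnected
    refine ⟨⟨⟨u1⟩, ?_⟩, ?_, ?_⟩
    · -- connectivity
      intro a b
      have T1 : ∀ x y : (H).V, (H).AdjOn Set.univ x y →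
          Relation.ReflTransGen (G1.AdjOn Set.univ)
            (Sum.elim id (fun _ => v1) x) (Sum.elim id (fun _ => v1) y) := by
        intro x y hxy
        rcases adjCases hu2v2 hxy with ⟨f, hf, c, d, hcd, rfl, rfl⟩ |
          ⟨f, hf, c, d, hcd, rfl, rfl⟩ | ⟨rfl, rfl⟩ | ⟨rfl, rfl⟩
        · exact .single ⟨f, trivial, hcd⟩
        · rw [hπ1 c, hπ1 d]
        · rw [hπ1 u2]
          exact .single ⟨e1, trivial, h1⟩
        · rw [hπ1 u2]; exact .single ⟨e1, trivial, h1.trans Sym2.eq_swap⟩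
      exact VEItmp.rtg_map _ T1 (hB.1.2 (Sum.inl a) (Sum.inl b))
    · -- at least two vertices
      exact Finite.one_lt_card_iff_nontrivial.mpr ⟨u1, v1, hu1v1⟩
    · -- no cut vertex
      rintro z ⟨a, b, ha, hb, -, hn⟩
      apply hn
      by_cases hz : z = v1
      · rw [hz] at ha hb ⊢
        have h' : (H).ReachAvoid (Sum.inl v1) (Sum.inl a) (Sum.inl b) :=
          hBav (fun h => ha (Sum.inl.inj h)) (fun h => hb (Sum.inl.inj h))
        have T3 : ∀ x y : (H).V,
            (x ≠ Sum.inl v1 ∧ y ≠ Sum.inl v1 ∧ (H).AdjOn Set.univ x y) →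
            Relation.ReflTransGen (fun c d => c ≠ v1 ∧ d ≠ v1 ∧ G1.AdjOn Set.univ c d)
              (Sum.elim id (fun _ => u1) x) (Sum.elim id (fun _ => u1) y) := by
          rintro x y ⟨hx, hy, hxy⟩
          rcases adjCases hu2v2 hxy with ⟨f, hf, c, d, hcd, rfl, rfl⟩ |
            ⟨f, hf, c, d, hcd, rfl, rfl⟩ | ⟨rfl, rfl⟩ | ⟨rfl, rfl⟩
          · exact .single ⟨fun h => hx (congrArg Sum.inl h),
              fun h => hy (congrArg Sum.inl h), ⟨f, trivial, hcd⟩⟩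
          · have hc : c ≠ v2 := fun h => hx (by rw [h, ι2_v2])
            have hd : d ≠ v2 := fun h => hy (by rw [h, ι2_v2])
            rw [hπ1' c hc, hπ1' d hd]
          · rw [hπ1' u2 hu2v2]
            exact Relation.ReflTransGen.refl
          · rw [hπ1' u2 hu2v2]
            exact Relation.ReflTransGen.refl
        exact VEItmp.rtg_map _ T3 h'
      · have h' : (H).ReachAvoid (Sum.inl z) (Sum.inl a) (Sum.inl b) :=
          hBav (fun h => ha (Sum.inl.inj h)) (fun h => hb (Sum.inl.inj h))
        have T2 : ∀ x y : (H).V,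
            (x ≠ Sum.inl z ∧ y ≠ Sum.inl z ∧ (H).AdjOn Set.univ x y) →
            Relation.ReflTransGen (fun c d => c ≠ z ∧ d ≠ z ∧ G1.AdjOn Set.univ c d)
              (Sum.elim id (fun _ => v1) x) (Sum.elim id (fun _ => v1) y) := by
          rintro x y ⟨hx, hy, hxy⟩
          rcases adjCases hu2v2 hxy with ⟨f, hf, c, d, hcd, rfl, rfl⟩ |
            ⟨f, hf, c, d, hcd, rfl, rfl⟩ | ⟨rfl, rfl⟩ | ⟨rfl, rfl⟩
          · exact .single ⟨fun h => hx (congrArg Sum.inl h),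
              fun h => hy (congrArg Sum.inl h), ⟨f, trivial, hcd⟩⟩
          · rw [hπ1 c, hπ1 d]
          · rw [hπ1 u2]
            exact .single ⟨fun h => hx (congrArg Sum.inl h), fun h => hz h.symm,
              ⟨e1, trivial, h1⟩⟩
          · rw [hπ1 u2]
            exact .single ⟨fun h => hz h.symm, fun h => hy (congrArg Sum.inl h),
              ⟨e1, trivial, h1.trans Sym2.eq_swap⟩⟩
        exact VEItmp.rtg_map _ T2 h'
  · -- G2 is biconnected
    refine ⟨⟨⟨u2⟩, ?_⟩, ?_, ?_⟩
    · -- connectivity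
      intro a b
      have T4 : ∀ x y : (H).V, (H).AdjOn Set.univ x y →
          Relation.ReflTransGen (G2.AdjOn Set.univ)
            (Sum.elim (fun _ => v2) Subtype.val x)
            (Sum.elim (fun _ => v2) Subtype.val y) := by
        intro x y hxy
        rcases adjCases hu2v2 hxy with ⟨f, hf, c, d, hcd, rfl, rfl⟩ |
          ⟨f, hf, c, d, hcd, rfl, rfl⟩ | ⟨rfl, rfl⟩ | ⟨rfl, rfl⟩
        · exact .refl
        · rw [hπ2 c, hπ2 d]; exact .single ⟨f, trivial, hcd⟩
        · rw [hπ2 u2]; exact .single ⟨e2, trivial, h2.trans Sym2.eq_swap⟩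
        · rw [hπ2 u2]; exact .single ⟨e2, trivial, h2⟩
      have := VEItmp.rtg_map _ T4 (hB.1.2 (ι a) (ι b))
      rwa [hπ2 a, hπ2 b] at this
    · exact Finite.one_lt_card_iff_nontrivial.mpr ⟨u2, v2, hu2v2⟩
    · -- no cut vertex
      rintro z ⟨a, b, ha, hb, -, hn⟩
      apply hn
      by_cases hz : z = v2
      · rw [hz] at ha hb ⊢
        have hane : ι a ≠ Sum.inl v1 := by rw [ι2_ne ha]; simp
        have hbne : ι b ≠ Sum.inl v1 := by rw [ι2_ne hb]; simp
        have h' : (H).ReachAvoid (Sum.inl v1) (ι a) (ι b) := hBav hane hbne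
        have T6 : ∀ x y : (H).V,
            (x ≠ Sum.inl v1 ∧ y ≠ Sum.inl v1 ∧ (H).AdjOn Set.univ x y) →
            Relation.ReflTransGen (fun c d => c ≠ v2 ∧ d ≠ v2 ∧ G2.AdjOn Set.univ c d)
              (Sum.elim (fun _ => u2) Subtype.val x)
              (Sum.elim (fun _ => u2) Subtype.val y) := by
          rintro x y ⟨hx, hy, hxy⟩
          rcases adjCases hu2v2 hxy with ⟨f, hf, c, d, hcd, rfl, rfl⟩ |
            ⟨f, hf, c, d, hcd, rfl, rfl⟩ | ⟨rfl, rfl⟩ | ⟨rfl, rfl⟩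
          · exact .refl
          · have hc : c ≠ v2 := fun h => hx (by rw [h, ι2_v2])
            have hd : d ≠ v2 := fun h => hy (by rw [h, ι2_v2])
            rw [hπ2' c hc, hπ2' d hd]
            exact .single ⟨hc, hd, ⟨f, trivial, hcd⟩⟩
          · rw [hπ2' u2 hu2v2]
            exact Relation.ReflTransGen.refl
          · rw [hπ2' u2 hu2v2]
            exact Relation.ReflTransGen.refl
        have := VEItmp.rtg_map _ T6 h'
        rwa [hπ2' a ha, hπ2' b hb] at this
      · have h' : (H).ReachAvoid (ι z) (ι a) (ι b) :=
          hBav (fun h => ha (ι2_inj h)) (fun h => hb (ι2_inj h))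
        have T5 : ∀ x y : (H).V,
            (x ≠ ι z ∧ y ≠ ι z ∧ (H).AdjOn Set.univ x y) →
            Relation.ReflTransGen (fun c d => c ≠ z ∧ d ≠ z ∧ G2.AdjOn Set.univ c d)
              (Sum.elim (fun _ => v2) Subtype.val x)
              (Sum.elim (fun _ => v2) Subtype.val y) := by
          rintro x y ⟨hx, hy, hxy⟩
          rcases adjCases hu2v2 hxy with ⟨f, hf, c, d, hcd, rfl, rfl⟩ |
            ⟨f, hf, c, d, hcd, rfl, rfl⟩ | ⟨rfl, rfl⟩ | ⟨rfl, rfl⟩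
          · exact .refl
          · rw [hπ2 c, hπ2 d]
            exact .single ⟨fun h => hx (congrArg (ι2 G1 G2 v1 v2) h), fun h => hy (congrArg (ι2 G1 G2 v1 v2) h),
              ⟨f, trivial, hcd⟩⟩
          · rw [hπ2 u2]
            exact .single ⟨fun h => hz h.symm, fun h => hy (congrArg (ι2 G1 G2 v1 v2) h),
              ⟨e2, trivial, h2.trans Sym2.eq_swap⟩⟩
          · rw [hπ2 u2]
            exact .single ⟨fun h => hx (congrArg (ι2 G1 G2 v1 v2) h), fun h => hz h.symm,
              ⟨e2, trivial, h2⟩⟩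
        have := VEItmp.rtg_map _ T5 h'
        rwa [hπ2 a, hπ2 b] at this

end

end VEIproof

namespace VEIproof

open MGraph

section

variable {G1 G2 : MGraph} {e1 : G1.E} {e2 : G2.E} {u1 v1 : G1.V} {u2 v2 : G2.V}
  {h2 : G2.ends e2 = s(u2, v2)}

local notation "H" => MGraph.vertexEdgeIdent G1 G2 e1 e2 u1 v1 u2 v2 h2
local notation "ι" => ι2 G1 G2 v1 v2

theorem backward (hm1 : 2 ≤ Nat.card G1.E) (hm2 : 2 ≤ Nat.card G2.E)
    (h1 : G1.ends e1 = s(u1, v1)) (hB1 : G1.Biconnected) (hB2 : G2.Biconnected) :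
    (H).Biconnected := by
  have hu1v1 : u1 ≠ v1 := noLoop_ne h1
  have hu2v2 : u2 ≠ v2 := noLoop_ne h2
  have path1 : ∀ a b : G1.V, G1.ReachOn {e1}ᶜ a b :=
    fun a b => del_edge_conn hB1 hm1 h1 a b
  have path2 : ∀ a b : G2.V, G2.ReachOn {e2}ᶜ a b :=
    fun a b => del_edge_conn hB2 hm2 h2 a b
  have hne1 : ∀ {f : G1.E} {p q : G1.V},
      G1.ends f = s(p, q) → p ≠ v1 → q ≠ v1 → f ≠ e1 := by
    intro f p q hend hp hq hfe
    rw [hfe, h1, Sym2.eq_iff] at hend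
    rcases hend with ⟨-, hv⟩ | ⟨-, hv⟩
    · exact hq hv.symm
    · exact hp hv.symm
  have hne2 : ∀ {f : G2.E} {p q : G2.V},
      G2.ends f = s(p, q) → p ≠ v2 → q ≠ v2 → f ≠ e2 := by
    intro f p q hend hp hq hfe
    rw [hfe, h2, Sym2.eq_iff] at hend
    rcases hend with ⟨-, hv⟩ | ⟨-, hv⟩
    · exact hq hv.symm
    · exact hp hv.symm
  have lift1 : ∀ a b : G1.V, (H).ReachOn Set.univ (Sum.inl a) (Sum.inl b) := by
    intro a b
    show Relation.ReflTransGen ((H).AdjOn Set.univ) _ _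
    refine VEItmp.rtg_map (Sum.inl : G1.V → (H).V) ?_ (path1 a b)
    rintro p q ⟨f, hf, hend⟩
    exact .single (adj1 (by simpa using hf) hend)
  have lift2 : ∀ a b : G2.V, (H).ReachOn Set.univ (ι a) (ι b) := by
    intro a b
    show Relation.ReflTransGen ((H).AdjOn Set.univ) _ _
    refine VEItmp.rtg_map ι ?_ (path2 a b)
    rintro p q ⟨f, hf, hend⟩
    exact .single (adj2 (by simpa using hf) hend)
  refine ⟨⟨⟨Sum.inl u1⟩, ?_⟩, ?_, ?_⟩
  · -- connectivity
    have anchor : ∀ p : (H).V, (H).ReachOn Set.univ p (Sum.inl v1) := by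
      rintro (c | ⟨w, hw⟩)
      · exact lift1 c v1
      · have := lift2 w v2
        rwa [ι2_v2, ι2_ne hw] at this
    exact fun p q => (anchor p).trans (reachOn_symm' (anchor q))
  · haveI := (H).finV
    exact Finite.one_lt_card_iff_nontrivial.mpr
      ⟨Sum.inl u1, Sum.inl v1, fun h => hu1v1 (Sum.inl.inj h)⟩
  · -- no cut vertex
    rintro x ⟨a, b, ha, hb, -, hn⟩
    apply hn
    rcases x with z | ⟨z, hz2⟩
    · by_cases hz : z = v1
      · -- removing the glue vertex
        rw [hz] at ha hb ⊢
        have s1 : ∀ c : G1.V, c ≠ v1 → (H).ReachAvoid (Sum.inl v1) (Sum.inl c) (Sum.inl u1) := by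
          intro c hc
          show Relation.ReflTransGen _ _ _
          refine VEItmp.rtg_map (Sum.inl : G1.V → (H).V) ?_ (bicon_avoid hB1 hc hu1v1)
          rintro p q ⟨hp, hq, f, -, hend⟩
          exact .single ⟨fun h => hp (Sum.inl.inj h), fun h => hq (Sum.inl.inj h),
            adj1 (hne1 hend hp hq) hend⟩
        have s2 : ∀ (w : G2.V), w ≠ v2 → (H).ReachAvoid (Sum.inl v1) (ι w) (ι u2) := by
          intro w hw
          show Relation.ReflTransGen _ _ _
          refine VEItmp.rtg_map ι ?_ (bicon_avoid hB2 hw hu2v2)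
          rintro p q ⟨hp, hq, f, -, hend⟩
          refine .single ⟨?_, ?_, adj2 (hne2 hend hp hq) hend⟩
          · rw [ι2_ne hp]; exact Sum.inr_ne_inl
          · rw [ι2_ne hq]; exact Sum.inr_ne_inl
        have sS : (H).ReachAvoid (Sum.inl v1) (Sum.inl u1) (ι u2) :=
          Relation.ReflTransGen.single ⟨fun h => hu1v1 (Sum.inl.inj h),
            by rw [ι2_ne hu2v2]; exact Sum.inr_ne_inl, adjS hu2v2⟩
        have route : ∀ p : (H).V, p ≠ Sum.inl v1 →
            (H).ReachAvoid (Sum.inl v1) p (Sum.inl u1) := by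
          rintro (c | ⟨w, hw⟩) hp
          · exact s1 c (fun h => hp (congrArg Sum.inl h))
          · have := (s2 w hw).trans (reachAvoid_symm' sS)
            rwa [ι2_ne hw] at this
        exact (route a ha).trans (reachAvoid_symm' (route b hb))
      · -- removing a non-glue vertex of G1
        have hι2nz : ∀ w : G2.V, ι w ≠ Sum.inl z := by
          intro w h
          by_cases hw : w = v2
          · rw [hw, ι2_v2] at h
            exact hz (Sum.inl.inj h).symm
          · rw [ι2_ne hw] at h
            simp at h
        have s2 : ∀ w : G2.V, (H).ReachAvoid (Sum.inl z) (ι w) (Sum.inl v1) := by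
          intro w
          have : (H).ReachAvoid (Sum.inl z) (ι w) (ι v2) := by
            show Relation.ReflTransGen _ _ _
            refine VEItmp.rtg_map ι ?_ (path2 w v2)
            rintro p q ⟨f, hf, hend⟩
            exact .single ⟨hι2nz p, hι2nz q, adj2 (by simpa using hf) hend⟩
          rwa [ι2_v2] at this
        have bypass : u1 ≠ z → (H).ReachAvoid (Sum.inl z) (Sum.inl u1) (Sum.inl v1) := by
          intro hu1z
          exact Relation.ReflTransGen.head
            ⟨fun h => hu1z (Sum.inl.inj h), hι2nz u2, adjS hu2v2⟩ (s2 u2)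
        have s1 : ∀ c : G1.V, c ≠ z →
            (H).ReachAvoid (Sum.inl z) (Sum.inl c) (Sum.inl v1) := by
          intro c hc
          show Relation.ReflTransGen _ _ _
          refine VEItmp.rtg_map (Sum.inl : G1.V → (H).V) ?_
            (bicon_avoid hB1 hc (fun h => hz h.symm))
          rintro p q ⟨hp, hq, f, -, hend⟩
          by_cases hfe : f = e1
          · rw [hfe, h1, Sym2.eq_iff] at hend
            rcases hend with ⟨rfl, rfl⟩ | ⟨rfl, rfl⟩
            · exact bypass hp
            · exact reachAvoid_symm' (bypass hq)
          · exact .single ⟨fun h => hp (Sum.inl.inj h), fun h => hq (Sum.inl.inj h),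
              adj1 hfe hend⟩
        have route : ∀ p : (H).V, p ≠ Sum.inl z →
            (H).ReachAvoid (Sum.inl z) p (Sum.inl v1) := by
          rintro (c | ⟨w, hw⟩) hp
          · exact s1 c (fun h => hp (congrArg Sum.inl h))
          · have := s2 w
            rwa [ι2_ne hw] at this
        exact (route a ha).trans (reachAvoid_symm' (route b hb))
    · -- removing a vertex of G2 other than v2
      have hinlnz : ∀ c : G1.V, (Sum.inl c : (H).V) ≠ Sum.inr ⟨z, hz2⟩ := by simp
      have hι2nz : ∀ p : G2.V, p ≠ z → ι p ≠ Sum.inr ⟨z, hz2⟩ := by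
        intro p hp h
        by_cases hpv : p = v2
        · rw [hpv, ι2_v2] at h
          simp at h
        · rw [ι2_ne hpv] at h
          exact hp (congrArg Subtype.val (Sum.inr.inj h))
      have s1 : ∀ c : G1.V, (H).ReachAvoid (Sum.inr ⟨z, hz2⟩) (Sum.inl c) (Sum.inl v1) := by
        intro c
        show Relation.ReflTransGen _ _ _
        refine VEItmp.rtg_map (Sum.inl : G1.V → (H).V) ?_ (path1 c v1)
        rintro p q ⟨f, hf, hend⟩
        exact .single ⟨hinlnz p, hinlnz q, adj1 (by simpa using hf) hend⟩
      have bypass : u2 ≠ z →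
          (H).ReachAvoid (Sum.inr ⟨z, hz2⟩) (ι u2) (Sum.inl v1) := by
        intro hu2z
        exact Relation.ReflTransGen.head
          ⟨hι2nz u2 hu2z, hinlnz u1, adjOn_symm' (adjS hu2v2)⟩ (s1 u1)
      have s2 : ∀ w : G2.V, w ≠ z →
          (H).ReachAvoid (Sum.inr ⟨z, hz2⟩) (ι w) (Sum.inl v1) := by
        intro w hw
        have : (H).ReachAvoid (Sum.inr ⟨z, hz2⟩) (ι w) (ι v2) := by
          show Relation.ReflTransGen _ _ _
          refine VEItmp.rtg_map ι ?_ (bicon_avoid hB2 hw (fun h => hz2 h.symm))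
          rintro p q ⟨hp, hq, f, -, hend⟩
          by_cases hfe : f = e2
          · rw [hfe, h2, Sym2.eq_iff] at hend
            rcases hend with ⟨rfl, rfl⟩ | ⟨rfl, rfl⟩
            · have := bypass hp
              rwa [← ι2_v2 (G1 := G1) (v1 := v1)] at this
            · have := reachAvoid_symm' (bypass hq)
              rwa [← ι2_v2 (G1 := G1) (v1 := v1)] at this
          · exact .single ⟨hι2nz p hp, hι2nz q hq, adj2 hfe hend⟩
        rwa [ι2_v2] at this
      have route : ∀ p : (H).V, p ≠ Sum.inr ⟨z, hz2⟩ →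
          (H).ReachAvoid (Sum.inr ⟨z, hz2⟩) p (Sum.inl v1) := by
        rintro (c | ⟨w, hw⟩) hp
        · exact s1 c
        · have hwz : w ≠ z := fun h => hp (by subst h; rfl)
          have := s2 w hwz
          rwa [ι2_ne hw] at this
      exact (route a ha).trans (reachAvoid_symm' (route b hb))

end

end VEIproof

/-- vertex-edge-identification of graphs with at least two edges
is biconnected iff both factors are biconnected. -/
theorem vertexEdgeIdent_biconnected_iff (G1 G2 : MGraph)
    (hm1 : 2 ≤ Nat.card G1.E) (hm2 : 2 ≤ Nat.card G2.E)
    (e1 : G1.E) (e2 : G2.E) (u1 v1 : G1.V) (u2 v2 : G2.V)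
    (h1 : G1.ends e1 = s(u1, v1)) (h2 : G2.ends e2 = s(u2, v2)) :
    (MGraph.vertexEdgeIdent G1 G2 e1 e2 u1 v1 u2 v2 h2).Biconnected ↔
      G1.Biconnected ∧ G2.Biconnected :=
  ⟨fun hB => VEIproof.forward h1 hB,
   fun h => VEIproof.backward hm1 hm2 h1 h.1 h.2⟩
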